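/- Let K = ℚ(q1,q2). The quotient ring K[x,y]/(x³ − 4q1(x+y), y³ − 4q2(x+y)) is a K-vector space of dimension 9. -/

import Mathlib

open MvPolynomial

/-- `K = ℚ(q1, q2)`. -/
abbrev Kq : Type := FractionRing (MvPolynomial (Fin 2) ℚ)

noncomputable def q1 : Kq := algebraMap (MvPolynomial (Fin 2) ℚ) Kq (X 0)
noncomputable def q2 : Kq := algebraMap (MvPolynomial (Fin 2) ℚ) Kq (X 1)

/-- `x^3 - 4 q1 (x + y)` in `K[x, y]`. -/
noncomputable def f1 : MvPolynomial (Fin 2) Kq :=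
  X 0 ^ 3 - C (4 * q1) * (X 0 + X 1)

/-- `y^3 - 4 q2 (x + y)` in `K[x, y]`. -/
noncomputable def f2 : MvPolynomial (Fin 2) Kq :=
  X 1 ^ 3 - C (4 * q2) * (X 0 + X 1)

lemma q1_ne_zero : q1 ≠ 0 := by
  simp only [q1]
  intro h
  have := (IsFractionRing.injective (MvPolynomial (Fin 2) ℚ) Kq)
  have h0 : (X 0 : MvPolynomial (Fin 2) ℚ) = 0 := by
    apply this
    rw [h, map_zero]
  exact MvPolynomial.X_ne_zero 0 h0

lemma fq1_ne_zero : (4 * q1 : Kq) ≠ 0 :=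
  mul_ne_zero (by norm_num) q1_ne_zero

/-- `h = (4 q1)⁻¹ x³ - x`, the expression of `y` mod `f1`. -/
noncomputable def hpol : Polynomial Kq :=
  Polynomial.C ((4 * q1)⁻¹) * Polynomial.X ^ 3 - Polynomial.X

/-- The substitution map `x ↦ x, y ↦ h`. -/
noncomputable def φ : MvPolynomial (Fin 2) Kq →ₐ[Kq] Polynomial Kq :=
  MvPolynomial.aeval ![Polynomial.X, hpol]

/-- The inclusion `K[x] → K[x,y]`. -/
noncomputable def σ : Polynomial Kq →ₐ[Kq] MvPolynomial (Fin 2) Kq :=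
  Polynomial.aeval (X 0)

noncomputable def gpol : Polynomial Kq := φ f2

lemma φ_f1 : φ f1 = 0 := by
  simp only [φ, f1, map_sub, map_mul, map_add, map_pow, aeval_X, aeval_C,
    Matrix.cons_val_zero, Matrix.cons_val_one, Matrix.head_cons, hpol,
    Polynomial.algebraMap_eq]
  have hC : (Polynomial.C 4 * Polynomial.C q1 : Polynomial Kq) * Polynomial.C ((4 * q1)⁻¹) = 1 := by
    rw [← Polynomial.C_mul, ← Polynomial.C_mul, mul_inv_cancel₀ fq1_ne_zero, Polynomial.C_1]
  linear_combination (-(Polynomial.X ^ 3) : Polynomial Kq) * hC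

lemma sub_σφ_mem (p : MvPolynomial (Fin 2) Kq) :
    p - σ (φ p) ∈ Ideal.span {f1} := by
  have key : (Ideal.Quotient.mkₐ Kq (Ideal.span {f1})) =
      ((Ideal.Quotient.mkₐ Kq (Ideal.span {f1})).comp σ).comp φ := by
    apply MvPolynomial.algHom_ext
    intro i
    fin_cases i
    · simp [φ, σ]
    · simp only [AlgHom.comp_apply, φ, σ, aeval_X, Matrix.cons_val_one, Matrix.head_cons,
        Ideal.Quotient.mkₐ_eq_mk]
      rw [eq_comm, Ideal.Quotient.eq]
      have hC : (C 4 * C q1 : MvPolynomial (Fin 2) Kq) * C ((4 * q1)⁻¹) = 1 := by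
        rw [← C_mul, ← C_mul, mul_inv_cancel₀ fq1_ne_zero, C_1]
      have key2 : (Polynomial.aeval (X 0 : MvPolynomial (Fin 2) Kq)) hpol - X 1 =
          C ((4 * q1)⁻¹) * f1 := by
        simp only [hpol, map_sub, map_mul, map_pow, Polynomial.aeval_X, Polynomial.aeval_C, f1]
        rw [show (algebraMap Kq (MvPolynomial (Fin 2) Kq)) ((4 * q1)⁻¹) = C ((4*q1)⁻¹) from rfl]
        linear_combination (X 0 + X 1 : MvPolynomial (Fin 2) Kq) * hC
      simp only [show ((⟨1, by omega⟩ : Fin 2)) = 1 from rfl, Matrix.cons_val_one,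
        Matrix.head_cons, Matrix.cons_val_zero]
      rw [key2]
      exact Ideal.mul_mem_left _ _ (Ideal.subset_span rfl)
  have := congrArg (fun F => F p) key
  simp only [AlgHom.comp_apply, Ideal.Quotient.mkₐ_eq_mk] at this
  exact Ideal.Quotient.eq.mp this

lemma φ_comp_σ : φ.comp σ = AlgHom.id Kq (Polynomial Kq) := by
  apply Polynomial.algHom_ext
  simp [φ, σ]

lemma φ_surj : Function.Surjective φ := fun p => ⟨σ p, by
  have := congrArg (fun F => F p) φ_comp_σ
  simpa using this⟩

lemma gpol_eq : gpol = hpol ^ 3 - Polynomial.C (4 * q2) * (Polynomial.X + hpol) := by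
  simp only [gpol, φ, f2, map_sub, map_mul, map_add, map_pow, aeval_X, aeval_C,
    Matrix.cons_val_zero, Matrix.cons_val_one, Matrix.head_cons, Polynomial.algebraMap_eq,
    Polynomial.C_mul]

lemma gpol_natDegree : gpol.natDegree = 9 := by
  rw [gpol_eq, hpol]
  compute_degree!
  exact q1_ne_zero

lemma gpol_ne_zero : gpol ≠ 0 := fun h => by
  have := gpol_natDegree
  rw [h] at this
  simp at this

noncomputable def ψ : MvPolynomial (Fin 2) Kq →ₐ[Kq] (Polynomial Kq ⧸ Ideal.span {gpol}) :=
  (Ideal.Quotient.mkₐ Kq (Ideal.span {gpol})).comp φ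

lemma ψ_surj : Function.Surjective ψ :=
  (Ideal.Quotient.mkₐ_surjective Kq _).comp φ_surj

lemma span_f1_le : Ideal.span {f1} ≤ Ideal.span {f1, f2} :=
  Ideal.span_mono (Set.singleton_subset_iff.mpr (by simp))

lemma ker_ψ : RingHom.ker ψ = Ideal.span {f1, f2} := by
  apply le_antisymm
  · intro p hp
    rw [RingHom.mem_ker] at hp
    simp only [ψ, AlgHom.comp_apply, Ideal.Quotient.mkₐ_eq_mk,
      Ideal.Quotient.eq_zero_iff_mem] at hp
    obtain ⟨c, hc⟩ := Ideal.mem_span_singleton'.mp hp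
    have h1 : p - σ (φ p) ∈ Ideal.span {f1, f2} := span_f1_le (sub_σφ_mem p)
    have h2 : σ gpol ∈ Ideal.span {f1, f2} := by
      have : σ gpol - f2 ∈ Ideal.span {f1, f2} := by
        have := sub_σφ_mem f2
        have h' : σ gpol - f2 = -(f2 - σ (φ f2)) := by rw [gpol]; ring
        rw [h']
        exact neg_mem (span_f1_le this)
      have := Ideal.add_mem _ this (Ideal.subset_span (by simp : f2 ∈ ({f1, f2} : Set _)))
      simpa using this
    have : p = (p - σ (φ p)) + σ c * σ gpol := by
      rw [← map_mul, hc]; ring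
    rw [this]
    exact Ideal.add_mem _ h1 (Ideal.mul_mem_left _ _ h2)
  · rw [Ideal.span_le]
    rintro x (rfl | rfl)
    · rw [SetLike.mem_coe, RingHom.mem_ker]
      simp [ψ, φ_f1]
    · rw [SetLike.mem_coe, RingHom.mem_ker]
      simp only [ψ, AlgHom.comp_apply, Ideal.Quotient.mkₐ_eq_mk,
        Ideal.Quotient.eq_zero_iff_mem]
      exact Ideal.subset_span rfl

theorem verra_quantum_ring_dimension :
    Module.finrank Kq (MvPolynomial (Fin 2) Kq ⧸ Ideal.span {f1, f2}) = 9 := by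
  have e : (MvPolynomial (Fin 2) Kq ⧸ Ideal.span {f1, f2}) ≃ₐ[Kq]
      (Polynomial Kq ⧸ Ideal.span {gpol}) := by
    rw [← ker_ψ]
    exact Ideal.quotientKerAlgEquivOfSurjective ψ_surj
  rw [e.toLinearEquiv.finrank_eq]
  show Module.finrank Kq (AdjoinRoot gpol) = 9
  rw [(AdjoinRoot.powerBasis gpol_ne_zero).finrank, AdjoinRoot.powerBasis_dim, gpol_natDegree]
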